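/- Suppose Y = αX + E_Y where X ~ N(μ_X, σ_X²), E_Y ~ N(μ_{E_Y}, σ_{E_Y}²), X and E_Y are independent, and α ∈ ℝ. Define β = α σ_X² / (α² σ_X² + σ_{E_Y}²), μ_Y = α μ_X + μ_{E_Y}, σ_Y² = α² σ_X² + σ_{E_Y}², μ_{E_X} = (1 − αβ) μ_X − β μ_{E_Y}, σ_{E_X}² = (1 − αβ)² σ_X² + β² σ_{E_Y}². Then the model X = βY + E_X with Y ~ N(μ_Y, σ_Y²), E_X ~ N(μ_{E_X}, σ_{E_X}²), and E_X independent of Y, induces the same joint distribution of (X,Y). -/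

import Mathlib

open MeasureTheory ProbabilityTheory


lemma aux_map_affine_gauss (r m : ℝ) :
    Measure.map (fun x => r * x + m) (gaussianReal 0 1)
      = gaussianReal m ⟨r ^ 2, sq_nonneg r⟩ := by
  have : (fun x => r * x + m) = (fun x => x + m) ∘ (fun x => r * x) := rfl
  rw [this, ← Measure.map_map (measurable_add_const m) (measurable_const_mul r)]
  rw [show (fun x : ℝ => r * x) = (r * ·) from rfl, gaussianReal_map_const_mul,
    show (fun x : ℝ => x + m) = (· + m) from rfl, gaussianReal_map_add_const]
  simp
  rfl


lemma aux_gauss_prod_density :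
    (gaussianReal 0 1).prod (gaussianReal 0 1)
      = (volume : Measure (ℝ × ℝ)).withDensity
          (fun p => gaussianPDF 0 1 p.1 * gaussianPDF 0 1 p.2) := by
  refine (Measure.prod_eq (μ := gaussianReal 0 1) (ν := gaussianReal 0 1)
    (μν := (volume : Measure (ℝ × ℝ)).withDensity (fun p => gaussianPDF 0 1 p.1 * gaussianPDF 0 1 p.2))
    fun s t hs ht => ?_)
  rw [withDensity_apply _ (hs.prod ht),
    gaussianReal_of_var_ne_zero 0 one_ne_zero,
    withDensity_apply _ hs, withDensity_apply _ ht,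
    Measure.volume_eq_prod, ← Measure.prod_restrict]
  exact lintegral_prod_mul (measurable_gaussianPDF 0 1).aemeasurable
    (measurable_gaussianPDF 0 1).aemeasurable


lemma aux_rot_volume (c s : ℝ) (hcs : c ^ 2 + s ^ 2 = 1) :
    Measure.map (fun p : ℝ × ℝ => (c * p.1 - s * p.2, s * p.1 + c * p.2))
      (volume : Measure (ℝ × ℝ)) = volume := by
  set L : (ℝ × ℝ) →ₗ[ℝ] (ℝ × ℝ) :=
    Matrix.toLin (Module.Basis.finTwoProd ℝ) (Module.Basis.finTwoProd ℝ) !![c, -s; s, c] with hL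
  have hdet : LinearMap.det L = 1 := by
    rw [hL, LinearMap.det_toLin, Matrix.det_fin_two_of]
    nlinarith [hcs]
  have hfun : (fun p : ℝ × ℝ => (c * p.1 - s * p.2, s * p.1 + c * p.2)) = ⇑L := by
    funext p
    rw [hL, Matrix.toLin_finTwoProd_apply]
    simp only [Prod.mk.injEq]
    exact ⟨by ring, trivial⟩
  rw [hfun, Measure.map_linearMap_addHaar_eq_smul_addHaar volume (by rw [hdet]; norm_num),
    hdet]
  norm_num


lemma aux_pdf_rot (c s x y : ℝ) (hcs : c ^ 2 + s ^ 2 = 1) :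
    gaussianPDF 0 1 (c * x - s * y) * gaussianPDF 0 1 (s * x + c * y)
      = gaussianPDF 0 1 x * gaussianPDF 0 1 y := by
  have key : ∀ a b : ℝ, gaussianPDF 0 1 a * gaussianPDF 0 1 b
      = ENNReal.ofReal ((Real.sqrt (2 * Real.pi))⁻¹ ^ 2 * Real.exp (-(a^2 + b^2) / 2)) := by
    intro a b
    rw [gaussianPDF, gaussianPDF, ← ENNReal.ofReal_mul (gaussianPDFReal_nonneg _ _ _)]
    congr 1
    simp only [gaussianPDFReal, NNReal.coe_one, mul_one, sub_zero]
    rw [mul_mul_mul_comm, ← Real.exp_add]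
    congr 1
    · ring
    · congr 1; ring
  rw [key, key]
  congr 3
  nlinarith [hcs]

lemma aux_rot_gauss (c s : ℝ) (hcs : c ^ 2 + s ^ 2 = 1) :
    Measure.map (fun p : ℝ × ℝ => (c * p.1 - s * p.2, s * p.1 + c * p.2))
      ((gaussianReal 0 1).prod (gaussianReal 0 1))
      = (gaussianReal 0 1).prod (gaussianReal 0 1) := by
  set R : ℝ × ℝ → ℝ × ℝ := fun p => (c * p.1 - s * p.2, s * p.1 + c * p.2) with hR
  have hRmeas : Measurable R := by
    apply Measurable.prod <;> simp only [hR] <;> fun_prop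
  set F : ℝ × ℝ → ENNReal := fun p => gaussianPDF 0 1 p.1 * gaussianPDF 0 1 p.2 with hF
  have hFmeas : Measurable F := by
    exact Measurable.mul ((measurable_gaussianPDF 0 1).comp (by fun_prop)) ((measurable_gaussianPDF 0 1).comp (by fun_prop))
  have hFR : ∀ p, F (R p) = F p := fun p => aux_pdf_rot c s p.1 p.2 hcs
  rw [aux_gauss_prod_density]
  ext t ht
  rw [Measure.map_apply hRmeas ht, withDensity_apply _ (hRmeas ht),
    withDensity_apply _ ht]
  calc ∫⁻ x in R ⁻¹' t, F x = ∫⁻ x in R ⁻¹' t, F (R x) := by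
        refine setLIntegral_congr_fun (hRmeas ht) (fun x _ => ?_)
        rw [hFR]
      _ = ∫⁻ y in t, F y ∂(Measure.map R volume) := (setLIntegral_map ht hFmeas hRmeas).symm
      _ = ∫⁻ y in t, F y := by rw [aux_rot_volume c s hcs]

lemma aux_decomp (a b cc d : ℝ) (h : a * cc + b * d = 0) :
    ∃ c0 s0 r t : ℝ, c0 ^ 2 + s0 ^ 2 = 1 ∧
      a = r * c0 ∧ b = -(r * s0) ∧ cc = t * s0 ∧ d = t * c0 := by
  by_cases hab : a = 0 ∧ b = 0
  · obtain ⟨ha, hb⟩ := hab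
    by_cases hcd : cc = 0 ∧ d = 0
    · exact ⟨1, 0, 0, 0, by norm_num, by simp [ha], by simp [hb], by simp [hcd.1],
        by simp [hcd.2]⟩
    · have hpos : (0:ℝ) < cc ^ 2 + d ^ 2 := by
        rcases not_and_or.1 hcd with h' | h' <;> positivity
      have ht : Real.sqrt (cc ^ 2 + d ^ 2) > 0 := Real.sqrt_pos.2 hpos
      have ht2 : Real.sqrt (cc ^ 2 + d ^ 2) ^ 2 = cc ^ 2 + d ^ 2 := Real.sq_sqrt hpos.le
      refine ⟨d / Real.sqrt (cc ^ 2 + d ^ 2), cc / Real.sqrt (cc ^ 2 + d ^ 2),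
        0, Real.sqrt (cc ^ 2 + d ^ 2), ?_, by simp [ha], by simp [hb], ?_, ?_⟩
      · rw [div_pow, div_pow, ← add_div, ht2, add_comm (d ^ 2), div_self hpos.ne']
      · rw [mul_div_cancel₀ _ ht.ne']
      · rw [mul_div_cancel₀ _ ht.ne']
  · have hpos : (0:ℝ) < a ^ 2 + b ^ 2 := by
      rcases not_and_or.1 hab with h' | h' <;> positivity
    have hr : Real.sqrt (a ^ 2 + b ^ 2) > 0 := Real.sqrt_pos.2 hpos
    set r := Real.sqrt (a ^ 2 + b ^ 2) with hrdef
    have hr2 : r ^ 2 = a ^ 2 + b ^ 2 := Real.sq_sqrt hpos.le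
    refine ⟨a / r, -(b / r), r, cc * (-(b / r)) + d * (a / r), ?_, ?_, ?_, ?_, ?_⟩
    · rw [div_pow, neg_pow, div_pow]
      rw [show ((-1:ℝ))^2 * (b^2 / r^2) = b^2/r^2 by ring, ← add_div, hr2,
        div_self hpos.ne']
    · rw [mul_div_cancel₀ _ hr.ne']
    · rw [mul_neg, neg_neg, mul_div_cancel₀ _ hr.ne']
    · field_simp
      linear_combination cc * hr2 + a * h
    · field_simp
      linear_combination d * hr2 + b * h

lemma aux_map_orth (a b cc d m1 m2 : ℝ) (h : a * cc + b * d = 0) :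
    Measure.map (fun p : ℝ × ℝ => (a * p.1 + b * p.2 + m1, cc * p.1 + d * p.2 + m2))
      ((gaussianReal 0 1).prod (gaussianReal 0 1))
      = (gaussianReal m1 ⟨a ^ 2 + b ^ 2, by positivity⟩).prod
        (gaussianReal m2 ⟨cc ^ 2 + d ^ 2, by positivity⟩) := by
  obtain ⟨c0, s0, r, t, hcs, ha, hb, hc, hd⟩ := aux_decomp a b cc d h
  have hfun : (fun p : ℝ × ℝ => (a * p.1 + b * p.2 + m1, cc * p.1 + d * p.2 + m2))
      = (Prod.map (fun x => r * x + m1) (fun x => t * x + m2)) ∘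
        (fun p : ℝ × ℝ => (c0 * p.1 - s0 * p.2, s0 * p.1 + c0 * p.2)) := by
    funext p
    simp only [Function.comp_apply, Prod.map_apply, Prod.mk.injEq]
    subst ha hb hc hd
    constructor <;> ring
  have hRmeas : Measurable (fun p : ℝ × ℝ => (c0 * p.1 - s0 * p.2, s0 * p.1 + c0 * p.2)) := by
    fun_prop
  have hPmeas : Measurable (Prod.map (fun x : ℝ => r * x + m1) (fun x : ℝ => t * x + m2)) := by
    fun_prop
  rw [hfun, ← Measure.map_map hPmeas hRmeas, aux_rot_gauss c0 s0 hcs,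
    ← Measure.map_prod_map _ _ (by fun_prop) (by fun_prop),
    aux_map_affine_gauss, aux_map_affine_gauss]
  have h1 : (⟨r ^ 2, sq_nonneg r⟩ : NNReal) = ⟨a ^ 2 + b ^ 2, by positivity⟩ := by
    ext
    subst ha hb
    simp only [NNReal.coe_mk]
    nlinarith [hcs]
  have h2 : (⟨t ^ 2, sq_nonneg t⟩ : NNReal) = ⟨cc ^ 2 + d ^ 2, by positivity⟩ := by
    ext
    subst hc hd
    simp only [NNReal.coe_mk]
    nlinarith [hcs]
  rw [h1, h2]

/-- **Non-identifiability of the linear-Gaussian additive noise model.**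
Suppose `Y = αX + E_Y` with `X ~ N(μ_X, σ_X²)`, `E_Y ~ N(μ_{E_Y}, σ_{E_Y}²)` independent.
With `β = α σ_X² / (α² σ_X² + σ_{E_Y}²)`, `μ_Y = α μ_X + μ_{E_Y}`,
`σ_Y² = α² σ_X² + σ_{E_Y}²`, `μ_{E_X} = (1 − αβ) μ_X − β μ_{E_Y}`,
`σ_{E_X}² = (1 − αβ)² σ_X² + β² σ_{E_Y}²`, the backward model `X = βY + E_X` with
`Y ~ N(μ_Y, σ_Y²)`, `E_X ~ N(μ_{E_X}, σ_{E_X}²)`, `E_X ⟂ Y`, induces the same joint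
distribution of `(X,Y)`. -/
theorem linear_gaussian_backward_model_same_joint
    {Ω : Type*} [MeasurableSpace Ω] (P : Measure Ω) [IsProbabilityMeasure P]
    {Ω' : Type*} [MeasurableSpace Ω'] (P' : Measure Ω') [IsProbabilityMeasure P']
    (α : ℝ) (μX μEY : ℝ) (vX vEY : NNReal)
    -- the forward model `Y = α X + E_Y`:
    (X EY : Ω → ℝ) (hX_meas : Measurable X) (hEY_meas : Measurable EY)
    (hX_law : Measure.map X P = gaussianReal μX vX)
    (hEY_law : Measure.map EY P = gaussianReal μEY vEY)
    (hindep : IndepFun X EY P)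
    (Y : Ω → ℝ) (hY : Y = fun ω => α * X ω + EY ω)
    -- the derived parameters:
    (β μY μEX : ℝ) (vY vEX : NNReal)
    (hβ : β = α * (vX : ℝ) / (α ^ 2 * (vX : ℝ) + (vEY : ℝ)))
    (hμY : μY = α * μX + μEY)
    (hvY : (vY : ℝ) = α ^ 2 * (vX : ℝ) + (vEY : ℝ))
    (hμEX : μEX = (1 - α * β) * μX - β * μEY)
    (hvEX : (vEX : ℝ) = (1 - α * β) ^ 2 * (vX : ℝ) + β ^ 2 * (vEY : ℝ))
    -- the backward model `X' = β Y' + E_X`: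
    (Y' EX : Ω' → ℝ) (hY'_meas : Measurable Y') (hEX_meas : Measurable EX)
    (hY'_law : Measure.map Y' P' = gaussianReal μY vY)
    (hEX_law : Measure.map EX P' = gaussianReal μEX vEX)
    (hindep' : IndepFun EX Y' P')
    (X' : Ω' → ℝ) (hX' : X' = fun ω => β * Y' ω + EX ω) :
    Measure.map (fun ω => (X ω, Y ω)) P = Measure.map (fun ω => (X' ω, Y' ω)) P' := by
  have hsX : Real.sqrt vX ^ 2 = (vX : ℝ) := Real.sq_sqrt (NNReal.coe_nonneg vX)
  have hsEY : Real.sqrt vEY ^ 2 = (vEY : ℝ) := Real.sq_sqrt (NNReal.coe_nonneg vEY)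
  set γ : Measure (ℝ × ℝ) := (gaussianReal 0 1).prod (gaussianReal 0 1) with hγ
  -- the key algebraic identity for β
  have hkey : α * (vX : ℝ) - β * (α ^ 2 * (vX : ℝ) + (vEY : ℝ)) = 0 := by
    by_cases hden : α ^ 2 * (vX : ℝ) + (vEY : ℝ) = 0
    · have h1 : α ^ 2 * (vX : ℝ) = 0 := by
        have h3 := NNReal.coe_nonneg vEY
        have h4 := mul_nonneg (sq_nonneg α) (NNReal.coe_nonneg vX)
        linarith
      have h2 : α * (vX : ℝ) = 0 := by
        rcases mul_eq_zero.1 h1 with h | h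
        · simp [pow_eq_zero_iff] at h
          simp [h]
        · simp [h]
      rw [hden, h2, mul_zero, sub_zero]
    · rw [hβ]
      field_simp
      ring
  -- the affine map sending γ to the joint law of the backward model
  set M : ℝ × ℝ → ℝ × ℝ := fun q => (β * q.2 + q.1, q.2) with hM
  have hMmeas : Measurable M := by fun_prop
  -- forward side
  have hfwd : Measure.map (fun ω => (X ω, EY ω)) P
      = (gaussianReal μX vX).prod (gaussianReal μEY vEY) := by
    rw [(indepFun_iff_map_prod_eq_prod_map_map hX_meas.aemeasurable
      hEY_meas.aemeasurable).1 hindep, hX_law, hEY_law]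
  have hΦ : (gaussianReal μX vX).prod (gaussianReal μEY vEY)
      = Measure.map (Prod.map (fun x : ℝ => Real.sqrt vX * x + μX)
          (fun x : ℝ => Real.sqrt vEY * x + μEY)) γ := by
    rw [hγ, ← Measure.map_prod_map _ _ (by fun_prop) (by fun_prop),
      aux_map_affine_gauss, aux_map_affine_gauss]
    congr 2 <;> ext <;> simp [hsX, hsEY] <;> rfl
  have hL : Measure.map (fun ω => (X ω, Y ω)) P
      = Measure.map ((fun e : ℝ × ℝ => (e.1, α * e.1 + e.2)) ∘ (fun ω => (X ω, EY ω))) P := by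
    congr 1
    funext ω
    simp [hY]
  -- the intermediate affine map Ψ
  set a : ℝ := (1 - α * β) * Real.sqrt vX with ha
  set b : ℝ := -(β * Real.sqrt vEY) with hb
  set c : ℝ := α * Real.sqrt vX with hc
  set d : ℝ := Real.sqrt vEY with hd
  have horth : a * c + b * d = 0 := by
    rw [ha, hb, hc, hd]
    linear_combination ((1 - α * β) * α) * hsX - β * hsEY + hkey
  have hΨ : Measure.map (fun p : ℝ × ℝ => (a * p.1 + b * p.2 + μEX, c * p.1 + d * p.2 + μY)) γ
      = (gaussianReal μEX vEX).prod (gaussianReal μY vY) := by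
    rw [hγ, aux_map_orth a b c d μEX μY horth]
    congr 2
    · ext
      change a ^ 2 + b ^ 2 = _
      rw [ha, hb, hvEX]
      ring_nf
      linear_combination (1 - α * β) ^ 2 * hsX + β ^ 2 * hsEY
    · ext
      change c ^ 2 + d ^ 2 = _
      rw [hc, hd, hvY]
      linear_combination α ^ 2 * hsX + hsEY
  -- the composition identity
  have hcomp : (fun e : ℝ × ℝ => (e.1, α * e.1 + e.2)) ∘
        (Prod.map (fun x : ℝ => Real.sqrt vX * x + μX) (fun x : ℝ => Real.sqrt vEY * x + μEY))
      = M ∘ (fun p : ℝ × ℝ => (a * p.1 + b * p.2 + μEX, c * p.1 + d * p.2 + μY)) := by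
    funext p
    simp only [Function.comp_apply, Prod.map_apply, Prod.map_fst, Prod.map_snd, hM, Prod.mk.injEq, ha, hb, hc, hd]
    subst hμY hμEX
    constructor <;> ring
  -- backward side
  have hbwd : Measure.map (fun ω => (EX ω, Y' ω)) P'
      = (gaussianReal μEX vEX).prod (gaussianReal μY vY) := by
    rw [(indepFun_iff_map_prod_eq_prod_map_map hEX_meas.aemeasurable
      hY'_meas.aemeasurable).1 hindep', hEX_law, hY'_law]
  have hbwd2 : Measure.map (fun ω => (X' ω, Y' ω)) P'
      = Measure.map (M ∘ (fun ω => (EX ω, Y' ω))) P' := by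
    congr 1
    funext ω
    simp [hX', hM]
  calc Measure.map (fun ω => (X ω, Y ω)) P
      = Measure.map ((fun e : ℝ × ℝ => (e.1, α * e.1 + e.2)) ∘ (fun ω => (X ω, EY ω))) P := hL
    _ = Measure.map (fun e : ℝ × ℝ => (e.1, α * e.1 + e.2))
          (Measure.map (fun ω => (X ω, EY ω)) P) :=
        (Measure.map_map (by fun_prop) (by fun_prop)).symm
    _ = Measure.map (fun e : ℝ × ℝ => (e.1, α * e.1 + e.2))
          (Measure.map (Prod.map (fun x : ℝ => Real.sqrt vX * x + μX)
            (fun x : ℝ => Real.sqrt vEY * x + μEY)) γ) := by rw [hfwd, hΦ]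
    _ = Measure.map ((fun e : ℝ × ℝ => (e.1, α * e.1 + e.2)) ∘
          (Prod.map (fun x : ℝ => Real.sqrt vX * x + μX)
            (fun x : ℝ => Real.sqrt vEY * x + μEY))) γ :=
        Measure.map_map (by fun_prop) (by fun_prop)
    _ = Measure.map (M ∘ (fun p : ℝ × ℝ => (a * p.1 + b * p.2 + μEX, c * p.1 + d * p.2 + μY)))
          γ := by rw [hcomp]
    _ = Measure.map M (Measure.map
          (fun p : ℝ × ℝ => (a * p.1 + b * p.2 + μEX, c * p.1 + d * p.2 + μY)) γ) :=
        (Measure.map_map hMmeas (by fun_prop)).symm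
    _ = Measure.map M ((gaussianReal μEX vEX).prod (gaussianReal μY vY)) := by rw [hΨ]
    _ = Measure.map M (Measure.map (fun ω => (EX ω, Y' ω)) P') := by rw [hbwd]
    _ = Measure.map (M ∘ (fun ω => (EX ω, Y' ω))) P' :=
        Measure.map_map hMmeas (by fun_prop)
    _ = Measure.map (fun ω => (X' ω, Y' ω)) P' := hbwd2.symm
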